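/- Define h(y) = 1/((2 − β + 3βy)(2 + 3βy)). Let β and x be real numbers, and set d = 3 + 3βx, y₁ = (1+β)x/d, y₂ = (1 + (1+2β)x)/d, y₃ = (2 + (1+3β)x)/d. Assume d ≠ 0 and that 2 − β + 3βyᵢ ≠ 0 and 2 + 3βyᵢ ≠ 0 for i = 1,2,3, and that (2 − β + 3βx)(2 + 3βx) ≠ 0. Then h(x) = ((3+3β)/d²) · (h(y₁) + h(y₂) + h(y₃)). (This is the transfer-operator fixed-point equation showing that h is the invariant density of the jump transformation S of type [1,1,1], Theorem 1(1).) -/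

import Mathlib

set_option maxHeartbeats 2000000 in
/-- Theorem 1(1), invariance of the density: the function
`h(y) = 1/((2 − β + 3βy)(2 + 3βy))` satisfies the transfer-operator
fixed-point equation for the jump transformation `S` of type `[1,1,1]`. -/
theorem invariant_density_type_one_one_one (β x : ℝ) :
    let h : ℝ → ℝ := fun y => 1 / ((2 - β + 3*β*y) * (2 + 3*β*y))
    let d : ℝ := 3 + 3*β*x
    let y₁ : ℝ := (1 + β)*x / d
    let y₂ : ℝ := (1 + (1 + 2*β)*x) / d
    let y₃ : ℝ := (2 + (1 + 3*β)*x) / d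
    d ≠ 0 →
    (2 - β + 3*β*y₁ ≠ 0 ∧ 2 + 3*β*y₁ ≠ 0) →
    (2 - β + 3*β*y₂ ≠ 0 ∧ 2 + 3*β*y₂ ≠ 0) →
    (2 - β + 3*β*y₃ ≠ 0 ∧ 2 + 3*β*y₃ ≠ 0) →
    (2 - β + 3*β*x) * (2 + 3*β*x) ≠ 0 →
    h x = ((3 + 3*β) / d^2) * (h y₁ + h y₂ + h y₃) := by
  intro h d y₁ y₂ y₃ hd ⟨h1a, h1b⟩ ⟨h2a, h2b⟩ ⟨h3a, h3b⟩ hx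
  have hxa : 2 - β + 3*β*x ≠ 0 := left_ne_zero_of_mul hx
  have hxb : 2 + 3*β*x ≠ 0 := right_ne_zero_of_mul hx
  -- rewrite the denominators as quotients
  have e1a : 2 - β + 3*β*y₁ = ((2-β)*d + 3*β*((1+β)*x)) / d := by
    simp only [y₁]; field_simp
  have e1b : 2 + 3*β*y₁ = (2*d + 3*β*((1+β)*x)) / d := by
    simp only [y₁]; field_simp
  have e2a : 2 - β + 3*β*y₂ = ((2-β)*d + 3*β*(1 + (1+2*β)*x)) / d := by
    simp only [y₂]; field_simp
  have e2b : 2 + 3*β*y₂ = (2*d + 3*β*(1 + (1+2*β)*x)) / d := by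
    simp only [y₂]; field_simp
  have e3a : 2 - β + 3*β*y₃ = ((2-β)*d + 3*β*(2 + (1+3*β)*x)) / d := by
    simp only [y₃]; field_simp
  have e3b : 2 + 3*β*y₃ = (2*d + 3*β*(2 + (1+3*β)*x)) / d := by
    simp only [y₃]; field_simp
  have n1a : (2-β)*d + 3*β*((1+β)*x) ≠ 0 := by
    intro hz; apply h1a; rw [e1a, hz, zero_div]
  have n1b : 2*d + 3*β*((1+β)*x) ≠ 0 := by
    intro hz; apply h1b; rw [e1b, hz, zero_div]
  have n2a : (2-β)*d + 3*β*(1 + (1+2*β)*x) ≠ 0 := by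
    intro hz; apply h2a; rw [e2a, hz, zero_div]
  have n2b : 2*d + 3*β*(1 + (1+2*β)*x) ≠ 0 := by
    intro hz; apply h2b; rw [e2b, hz, zero_div]
  have n3a : (2-β)*d + 3*β*(2 + (1+3*β)*x) ≠ 0 := by
    intro hz; apply h3a; rw [e3a, hz, zero_div]
  have n3b : 2*d + 3*β*(2 + (1+3*β)*x) ≠ 0 := by
    intro hz; apply h3b; rw [e3b, hz, zero_div]
  simp only [h]
  rw [e1a, e1b, e2a, e2b, e3a, e3b]
  rw [div_mul_div_comm, div_mul_div_comm, div_mul_div_comm]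
  rw [one_div_div, one_div_div, one_div_div]
  simp only [d] at *
  rw [div_add_div _ _ (mul_ne_zero n1a n1b) (mul_ne_zero n2a n2b),
    div_add_div _ _ (mul_ne_zero (mul_ne_zero n1a n1b) (mul_ne_zero n2a n2b)) (mul_ne_zero n3a n3b),
    div_mul_div_comm, div_eq_div_iff hx (mul_ne_zero (pow_ne_zero 2 hd)
      (mul_ne_zero (mul_ne_zero (mul_ne_zero n1a n1b) (mul_ne_zero n2a n2b)) (mul_ne_zero n3a n3b)))]
  ring
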